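/- arXiv:2003.12308 — 2 statements merged into one kernel-verified Lean document; each statement's English description precedes it below -/
import Mathlib

section
/- Let n ≥ 2 be even, m ≥ 1, and let F : 𝔽₂ⁿ → 𝔽₂ᵐ be a bent function. Then every codeword c ∈ C(F) has weight wt(c) ∈ {0, 2^{n−1} − 2^{n/2−1}, 2^{n−1}, 2^{n−1} + 2^{n/2−1}, 2ⁿ}; moreover the codewords of weight 2^{n−1} − 2^{n/2−1} or 2^{n−1} + 2^{n/2−1} are exactly those of the form x ↦ ε ⊕ ⟨a,x⟩ ⊕ ⟨b,F(x)⟩ with b ≠ 0. -/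
open Finset Function

/-- The vector space `𝔽₂ⁿ`. -/
abbrev BV (n : ℕ) := Fin n → ZMod 2

/-- The standard dot product `⟨u,v⟩ = Σᵢ uᵢ vᵢ` on `𝔽₂ⁿ`. -/
def bdot {n : ℕ} (u v : BV n) : ZMod 2 := ∑ i, u i * v i

/-- The Walsh coefficient `W_F(a,b) = Σ_x (−1)^{⟨b,F(x)⟩ ⊕ ⟨a,x⟩}` of an `(n,m)`-function. -/
def walsh {n m : ℕ} (F : BV n → BV m) (a : BV n) (b : BV m) : ℤ :=
  ∑ x : BV n, (-1 : ℤ) ^ ((bdot b (F x) + bdot a x).val)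

/-- An `(n,m)`-function is bent if all Walsh coefficients `W_F(a,b)`, `b ≠ 0`, equal `±2^{n/2}`. -/
def IsBent {n m : ℕ} (F : BV n → BV m) : Prop :=
  ∀ (a : BV n) (b : BV m), b ≠ 0 →
    walsh F a b = 2 ^ (n / 2) ∨ walsh F a b = -2 ^ (n / 2)

/-- A map `𝔽₂ⁿ → 𝔽₂ᵐ` is affine if it is a linear map followed by a translation. -/
def IsAffineF {n m : ℕ} (A : BV n → BV m) : Prop :=
  ∃ (L : BV n →ₗ[ZMod 2] BV m) (t : BV m), ∀ x, A x = L x + t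

/-- Extended-affine equivalence of `(n,m)`-functions: `F = A₁ ∘ F' ∘ A₂ + A₃` with `A₁`
a linear automorphism of `𝔽₂ᵐ`, `A₂` an affine automorphism of `𝔽₂ⁿ`, `A₃` affine. -/
def EAequiv {n m : ℕ} (F F' : BV n → BV m) : Prop :=
  ∃ (A₁ : BV m →ₗ[ZMod 2] BV m) (A₂ : BV n → BV n) (A₃ : BV n → BV m),
    Bijective A₁ ∧ IsAffineF A₂ ∧ Bijective A₂ ∧ IsAffineF A₃ ∧
    ∀ x, F x = A₁ (F' (A₂ x)) + A₃ x

/-- A codeword of the code `C(F)`: `x ↦ ε ⊕ ⟨a,x⟩ ⊕ ⟨b,F(x)⟩`. -/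
def codeword {n m : ℕ} (F : BV n → BV m) (ε : ZMod 2) (a : BV n) (b : BV m) :
    BV n → ZMod 2 :=
  fun x => ε + bdot a x + bdot b (F x)

/-- The linear code `C(F) = { x ↦ ε ⊕ ⟨a,x⟩ ⊕ ⟨b,F(x)⟩ }` of length `2ⁿ`. -/
def code {n m : ℕ} (F : BV n → BV m) : Set (BV n → ZMod 2) :=
  { c | ∃ (ε : ZMod 2) (a : BV n) (b : BV m), c = codeword F ε a b }

/-- The weight of a codeword: the size of its support. -/
def wtc {n : ℕ} (c : BV n → ZMod 2) : ℕ :=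
  (Finset.univ.filter (fun x => c x = 1)).card

lemma zmod2_cases : ∀ u : ZMod 2, u = 0 ∨ u = 1 := by decide

lemma neg_one_pow_add (u v : ZMod 2) :
    (-1:ℤ)^((u+v).val) = (-1:ℤ)^u.val * (-1:ℤ)^v.val := by
  revert u v; decide

lemma sum_neg_one_pow {n : ℕ} (c : BV n → ZMod 2) :
    ∑ x : BV n, (-1:ℤ)^((c x).val) = 2^n - 2 * wtc c := by
  classical
  rw [← Finset.sum_filter_add_sum_filter_not Finset.univ (fun x => c x = 1)]
  have e1 : ∀ x ∈ Finset.univ.filter (fun x => c x = 1),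
      (-1:ℤ)^((c x).val) = -1 := by
    intro x hx; rw [(Finset.mem_filter.mp hx).2]; rfl
  have e2 : ∀ x ∈ Finset.univ.filter (fun x => ¬ c x = 1),
      (-1:ℤ)^((c x).val) = 1 := by
    intro x hx
    rcases zmod2_cases (c x) with h | h
    · rw [h]; rfl
    · exact absurd h (Finset.mem_filter.mp hx).2
  rw [Finset.sum_congr rfl e1, Finset.sum_congr rfl e2, Finset.sum_const,
    Finset.sum_const]
  have h3 : (Finset.univ.filter (fun x => c x = 1)).card
      + (Finset.univ.filter (fun x => ¬ c x = 1)).card = 2^n := by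
    rw [Finset.card_filter_add_card_filter_not]
    simp [Finset.card_univ]
  have hle : (Finset.univ.filter (fun x => c x = 1)).card ≤ 2^n := by omega
  have h4 : (Finset.univ.filter (fun x => ¬ c x = 1)).card
      = 2^n - (Finset.univ.filter (fun x => c x = 1)).card := by omega
  rw [h4, wtc]
  simp only [nsmul_eq_mul, mul_one, mul_neg_one, Nat.cast_sub hle]
  push_cast
  ring

lemma balanced_of_ne_zero {n : ℕ} (a : BV n) (ha : a ≠ 0) :
    ∑ x : BV n, (-1:ℤ)^((bdot a x).val) = 0 := by
  classical
  obtain ⟨i, hi⟩ : ∃ i, a i ≠ 0 := by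
    by_contra h; push_neg at h; exact ha (funext h)
  have hai : a i = 1 := by
    rcases zmod2_cases (a i) with h | h
    · exact absurd h hi
    · exact h
  have key : ∀ x : BV n, bdot a (x + Pi.single i 1) = bdot a x + 1 := by
    intro x
    unfold bdot
    simp only [Pi.add_apply, mul_add, Finset.sum_add_distrib]
    congr 1
    rw [Finset.sum_eq_single i]
    · simp [hai]
    · intro j _ hj; simp [Pi.single_apply, hj]
    · simp
  have hsing : (Pi.single i 1 : BV n) + Pi.single i 1 = 0 := by
    ext j
    by_cases h : j = i <;> simp [Pi.single_apply, h]; decide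
  refine Finset.sum_involution (fun x _ => x + Pi.single i 1) ?_ ?_ ?_ ?_
  · intro x _
    rw [key x]
    rcases zmod2_cases (bdot a x) with h | h <;> rw [h] <;> decide
  · intro x _ _ h
    have := congrFun h i
    simp at this
  · intro x _; exact Finset.mem_univ _
  · intro x _
    rw [add_assoc, hsing, add_zero]

lemma sum_codeword {n m : ℕ} (F : BV n → BV m) (ε : ZMod 2) (a : BV n) (b : BV m) :
    ∑ x : BV n, (-1:ℤ)^((codeword F ε a b x).val) = (-1:ℤ)^ε.val * walsh F a b := by
  unfold codeword walsh
  rw [Finset.mul_sum]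
  refine Finset.sum_congr rfl fun x _ => ?_
  rw [add_assoc, neg_one_pow_add, neg_one_pow_add, add_comm (bdot b (F x)), neg_one_pow_add]

lemma wtc_codeword_eq {n m : ℕ} (F : BV n → BV m) (ε : ZMod 2) (a : BV n) (b : BV m) :
    (2:ℤ)^n - 2 * wtc (codeword F ε a b) = (-1:ℤ)^ε.val * walsh F a b := by
  rw [← sum_codeword, sum_neg_one_pow]

lemma wt_codeword_bent {n m : ℕ} (hn : 2 ≤ n) (F : BV n → BV m) (hF : IsBent F)
    (ε : ZMod 2) (a : BV n) (b : BV m) (hb : b ≠ 0) :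
    wtc (codeword F ε a b) = 2 ^ (n - 1) - 2 ^ (n / 2 - 1) ∨
    wtc (codeword F ε a b) = 2 ^ (n - 1) + 2 ^ (n / 2 - 1) := by
  have hkey := wtc_codeword_eq F ε a b
  have hs : (-1:ℤ)^ε.val = 1 ∨ (-1:ℤ)^ε.val = -1 := by
    rcases zmod2_cases ε with h | h <;> rw [h]
    · left; rfl
    · right; decide
  have hw := hF a b hb
  have hpn : (2:ℤ)^n = ((2 * 2^(n-1) : ℕ) : ℤ) := by
    push_cast
    rw [← pow_succ']
    congr 1
    omega
  have hqn : (2:ℤ)^(n/2) = ((2 * 2^(n/2-1) : ℕ) : ℤ) := by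
    push_cast
    rw [← pow_succ']
    congr 1
    omega
  have hqle : (2:ℕ)^(n/2-1) ≤ 2^(n-1) :=
    Nat.pow_le_pow_right (by norm_num) (by omega)
  rw [hpn] at hkey
  rw [hqn] at hw
  obtain ⟨P, hP⟩ : ∃ P, (2:ℕ)^(n-1) = P := ⟨_, rfl⟩
  obtain ⟨Q, hQ⟩ : ∃ Q, (2:ℕ)^(n/2-1) = Q := ⟨_, rfl⟩
  rw [hP] at hkey hqle ⊢
  rw [hQ] at hw hqle ⊢
  rcases hs with h1 | h1 <;> rcases hw with h2 | h2 <;>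
    rw [h1, h2] at hkey <;> omega

lemma bdot_zero_left {n : ℕ} (v : BV n) : bdot 0 v = 0 := by
  unfold bdot; simp

lemma wt_codeword_const {n m : ℕ} (F : BV n → BV m) (ε : ZMod 2) :
    wtc (codeword F ε 0 0) = 0 ∨ wtc (codeword F ε 0 0) = 2 ^ n := by
  have hc : codeword F ε 0 0 = fun _ => ε := by
    funext x; simp [codeword, bdot_zero_left]
  rcases zmod2_cases ε with h | h
  · left
    rw [hc, h, wtc]
    simp
  · right
    rw [hc, h, wtc]
    simp [Finset.card_univ]

lemma wt_codeword_lin {n m : ℕ} (hn : 1 ≤ n) (F : BV n → BV m) (ε : ZMod 2) (a : BV n)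
    (ha : a ≠ 0) : wtc (codeword F ε a 0) = 2 ^ (n - 1) := by
  have h1 : ∑ x : BV n, (-1:ℤ)^((codeword F ε a 0 x).val) = 0 := by
    have hterm : ∀ x : BV n, (-1:ℤ)^((codeword F ε a 0 x).val)
        = (-1:ℤ)^ε.val * (-1:ℤ)^((bdot a x).val) := by
      intro x
      unfold codeword
      rw [bdot_zero_left, add_zero, neg_one_pow_add]
    simp only [hterm]
    rw [← Finset.mul_sum, balanced_of_ne_zero a ha, mul_zero]
  rw [sum_neg_one_pow] at h1
  have hpn : (2:ℤ)^n = ((2 * 2^(n-1) : ℕ) : ℤ) := by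
    push_cast
    rw [← pow_succ']
    congr 1
    omega
  rw [hpn] at h1
  obtain ⟨P, hP⟩ : ∃ P, (2:ℕ)^(n-1) = P := ⟨_, rfl⟩
  rw [hP] at h1 ⊢
  omega


/-- For an `(n,m)`-bent function `F`, every codeword of `C(F)` has weight in
`{0, 2^{n−1} − 2^{n/2−1}, 2^{n−1}, 2^{n−1} + 2^{n/2−1}, 2ⁿ}`, and the codewords of weight
`2^{n−1} ∓ 2^{n/2−1}` are exactly those of the form `x ↦ ε ⊕ ⟨a,x⟩ ⊕ ⟨b,F(x)⟩` with `b ≠ 0`. -/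
theorem code_of_bent_weight_distribution
    {n m : ℕ} (hn : 2 ≤ n) (hev : Even n) (hm : 1 ≤ m)
    (F : BV n → BV m) (hF : IsBent F) :
    ∀ c ∈ code F,
      (wtc c = 0 ∨ wtc c = 2 ^ (n - 1) - 2 ^ (n / 2 - 1) ∨ wtc c = 2 ^ (n - 1) ∨
        wtc c = 2 ^ (n - 1) + 2 ^ (n / 2 - 1) ∨ wtc c = 2 ^ n) ∧
      ((wtc c = 2 ^ (n - 1) - 2 ^ (n / 2 - 1) ∨ wtc c = 2 ^ (n - 1) + 2 ^ (n / 2 - 1)) ↔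
        ∃ (ε : ZMod 2) (a : BV n) (b : BV m), b ≠ 0 ∧ c = codeword F ε a b) := by
  have hqlt : (2:ℕ)^(n/2-1) < 2^(n-1) :=
    Nat.pow_lt_pow_right (by norm_num) (by omega)
  have hq1 : 1 ≤ (2:ℕ)^(n/2-1) := Nat.one_le_two_pow
  have hpn : (2:ℕ)^n = 2 * 2^(n-1) := by
    rw [← pow_succ']; congr 1; omega
  rintro c ⟨ε, a, b, rfl⟩
  constructor
  · by_cases hb : b = 0
    · subst hb
      by_cases ha : a = 0
      · subst ha
        rcases wt_codeword_const F ε with h | h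
        · exact Or.inl h
        · exact Or.inr (Or.inr (Or.inr (Or.inr h)))
      · exact Or.inr (Or.inr (Or.inl (wt_codeword_lin (by omega) F ε a ha)))
    · rcases wt_codeword_bent hn F hF ε a b hb with h | h
      · exact Or.inr (Or.inl h)
      · exact Or.inr (Or.inr (Or.inr (Or.inl h)))
  · constructor
    · intro hwt
      by_cases hb : b = 0
      · exfalso
        subst hb
        by_cases ha : a = 0
        · subst ha
          rcases wt_codeword_const F ε with h | h <;> omega
        · have := wt_codeword_lin (by omega) F ε a ha
          omega
      · exact ⟨ε, a, b, hb, rfl⟩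
    · rintro ⟨ε', a', b', hb', heq⟩
      rw [heq]
      exact wt_codeword_bent hn F hF ε' a' b' hb'
end

section
/- Let n be even, m ≥ 1, and let G : 𝔽₂ⁿ → 𝔽₂^{m+1} be a bent function. Let F₁, …, F_k : 𝔽₂ⁿ → 𝔽₂ᵐ be pairwise extended-affine inequivalent bent functions such that for every bent function H : 𝔽₂ⁿ → 𝔽₂^{m+1} that is extended-affine equivalent to G, the (n,m)-function formed by the first m coordinate functions of H is extended-affine equivalent to some Fᵢ. Then |{ H : 𝔽₂ⁿ → 𝔽₂^{m+1} | H is extended-affine equivalent to G }| = 2^{n+1} · Σ_{i=1}^{k} |{ F : 𝔽₂ⁿ → 𝔽₂ᵐ | F is extended-affine equivalent to Fᵢ }| · |{ f : 𝔽₂ⁿ → 𝔽₂ | f is affine-free and (Fᵢ, f) is extended-affine equivalent to G }|. -/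
open Finset Function

/-- The extension of an `(n,m)`-function `F` by a Boolean function `f`:
`x ↦ (F(x), f(x)) : 𝔽₂ⁿ → 𝔽₂^{m+1}`. -/
def extendF {n m : ℕ} (F : BV n → BV m) (f : BV n → ZMod 2) : BV n → BV (m + 1) :=
  fun x => Fin.snoc (F x) (f x)

/-- The `(n,m)`-function formed by the first `m` coordinate functions of an
`(n,m+1)`-function. -/
def truncateF {n m : ℕ} (G : BV n → BV (m + 1)) : BV n → BV m :=
  fun x i => G x i.castSucc

/-- A Boolean function is affine-free (no constant or degree-one terms in its ANF) iff
`f(0) = 0` and `f(eᵢ) = 0` for all standard basis vectors `eᵢ`. -/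
def AffineFree {n : ℕ} (f : BV n → ZMod 2) : Prop :=
  f 0 = 0 ∧ ∀ i : Fin n, f (Pi.single i 1) = 0

/-! ### Helpers -/

lemma zmod2_add_self (a : ZMod 2) : a + a = 0 := by
  fin_cases a <;> decide

lemma bv_add_self {p : ℕ} (v : BV p) : v + v = 0 := by
  funext i; exact zmod2_add_self (v i)

lemma snoc_add {m : ℕ} (p q : BV m) (a b : ZMod 2) :
    (Fin.snoc (p + q) (a + b) : BV (m+1)) = Fin.snoc p a + Fin.snoc q b := by
  funext j
  refine Fin.lastCases ?_ (fun i => ?_) j <;>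
    simp [Fin.snoc_last, Fin.snoc_castSucc]

lemma trunc_extend {n m : ℕ} (F : BV n → BV m) (f : BV n → ZMod 2) :
    truncateF (extendF F f) = F := by
  funext x i; simp [truncateF, extendF]

lemma last_extend {n m : ℕ} (F : BV n → BV m) (f : BV n → ZMod 2) :
    (fun x => extendF F f x (Fin.last m)) = f := by
  funext x; simp [extendF]

lemma extend_trunc {n m : ℕ} (H : BV n → BV (m+1)) :
    extendF (truncateF H) (fun x => H x (Fin.last m)) = H := by
  funext x j
  refine Fin.lastCases ?_ (fun i => ?_) j <;>
    simp [extendF, truncateF]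

/-- snoc of a linear map and a linear functional, as a linear map. -/
def snocLM {n m : ℕ} (L : BV n →ₗ[ZMod 2] BV m) (ℓ : BV n →ₗ[ZMod 2] ZMod 2) :
    BV n →ₗ[ZMod 2] BV (m+1) :=
  LinearMap.pi (fun j => Fin.lastCases ℓ (fun i => (LinearMap.proj i).comp L) j)

lemma snocLM_apply {n m : ℕ} (L : BV n →ₗ[ZMod 2] BV m) (ℓ : BV n →ₗ[ZMod 2] ZMod 2)
    (x : BV n) : snocLM L ℓ x = Fin.snoc (L x) (ℓ x) := by
  funext j
  refine Fin.lastCases ?_ (fun i => ?_) j <;>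
    simp [snocLM, LinearMap.pi_apply]

/-- truncation as a linear map. -/
def truncLM (n m : ℕ) : BV (m+1) →ₗ[ZMod 2] BV m :=
  LinearMap.pi (fun i : Fin m => LinearMap.proj (i.castSucc))

lemma truncLM_apply {n m : ℕ} (y : BV (m+1)) (i : Fin m) :
    truncLM n m y i = y i.castSucc := rfl

/-- IsAffineF closure lemmas -/
lemma IsAffineF.compAff {n p q : ℕ} {A : BV p → BV q} {B : BV n → BV p}
    (hA : IsAffineF A) (hB : IsAffineF B) : IsAffineF (fun x => A (B x)) := by
  obtain ⟨LA, tA, hA⟩ := hA; obtain ⟨LB, tB, hB⟩ := hB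
  exact ⟨LA.comp LB, LA tB + tA, fun x => by simp [hA, hB, map_add, add_assoc]⟩

lemma IsAffineF.addAff {n m : ℕ} {A B : BV n → BV m}
    (hA : IsAffineF A) (hB : IsAffineF B) : IsAffineF (fun x => A x + B x) := by
  obtain ⟨LA, tA, hA⟩ := hA; obtain ⟨LB, tB, hB⟩ := hB
  refine ⟨LA + LB, tA + tB, fun x => by simp [hA, hB]; abel⟩

lemma isAffineF_linear {n m : ℕ} (L : BV n →ₗ[ZMod 2] BV m) : IsAffineF (fun x => L x) :=
  ⟨L, 0, fun x => by simp⟩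

lemma isAffineF_id {n : ℕ} : IsAffineF (fun x : BV n => x) :=
  ⟨LinearMap.id, 0, fun x => by simp⟩

lemma isAffineF_const {n m : ℕ} (c : BV m) : IsAffineF (fun _ : BV n => c) :=
  ⟨0, c, fun x => by simp⟩

/-! ### EAequiv is an equivalence relation -/

lemma EAequiv.refl {n m : ℕ} (F : BV n → BV m) : EAequiv F F := by
  refine ⟨LinearMap.id, id, fun _ => 0, Function.bijective_id, isAffineF_id,
    Function.bijective_id, isAffineF_const 0, fun x => by simp⟩

/-- From an affine bijection, produce an affine two-sided inverse. -/
lemma affine_inverse {p : ℕ} {A : BV p → BV p} (hA : IsAffineF A) (hb : Bijective A) :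
    ∃ B : BV p → BV p, IsAffineF B ∧ Bijective B ∧ (∀ x, B (A x) = x) ∧ (∀ y, A (B y) = y) := by
  obtain ⟨L, t, hL⟩ := hA
  have hAe : A = (fun z => z + t) ∘ (fun x => L x) := by funext x; simp [hL]
  have htb : Bijective (fun z : BV p => z + t) := (Equiv.addRight t).bijective
  have hLb : Bijective (fun x => L x) := by
    have : (fun x => L x) = (fun z => z + t) ∘ A := by
      funext x; simp [hL, add_assoc, bv_add_self]
    rw [this]; exact htb.comp hb
  let E := LinearEquiv.ofBijective L hLb
  refine ⟨fun y => E.symm (y + t), ⟨(E.symm : BV p →ₗ[ZMod 2] BV p), E.symm t,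
    fun y => by simp [map_add]⟩, ?_, fun x => ?_, fun y => ?_⟩
  · have : (fun y => E.symm (y + t)) = (fun z => E.symm z) ∘ (fun y => y + t) := rfl
    rw [this]
    exact E.symm.bijective.comp htb
  · show E.symm (A x + t) = x
    have : A x + t = L x := by simp [hL, add_assoc, bv_add_self]
    rw [this]
    exact E.symm_apply_apply x
  · show A (E.symm (y + t)) = y
    rw [hL]
    have h1 : ∀ z, L (E.symm z) = z := fun z => E.apply_symm_apply z
    rw [h1, add_assoc, bv_add_self, add_zero]

lemma EAequiv.symm {n m : ℕ} {F F' : BV n → BV m} (h : EAequiv F F') : EAequiv F' F := by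
  obtain ⟨A₁, A₂, A₃, hb1, ha2, hb2, ha3, heq⟩ := h
  obtain ⟨B₂, haB2, hbB2, hBA, hAB⟩ := affine_inverse ha2 hb2
  let E₁ := LinearEquiv.ofBijective A₁ hb1
  refine ⟨(E₁.symm : BV m →ₗ[ZMod 2] BV m), B₂, fun y => E₁.symm (A₃ (B₂ y)),
    E₁.symm.bijective, haB2, hbB2, ?_, fun y => ?_⟩
  · exact (isAffineF_linear (E₁.symm : BV m →ₗ[ZMod 2] BV m)).compAff (ha3.compAff haB2)
  · have h1 : F (B₂ y) = A₁ (F' y) + A₃ (B₂ y) := by rw [heq (B₂ y), hAB]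
    have h2 : E₁.symm (F (B₂ y)) = F' y + E₁.symm (A₃ (B₂ y)) := by
      rw [h1, map_add]
      congr 1
      exact E₁.symm_apply_apply (F' y)
    show F' y = E₁.symm (F (B₂ y)) + E₁.symm (A₃ (B₂ y))
    rw [h2, add_assoc, bv_add_self, add_zero]

lemma EAequiv.trans {n m : ℕ} {F F' F'' : BV n → BV m}
    (h : EAequiv F F') (h' : EAequiv F' F'') : EAequiv F F'' := by
  obtain ⟨A₁, A₂, A₃, hb1, ha2, hb2, ha3, heq⟩ := h
  obtain ⟨B₁, B₂, B₃, hb1', ha2', hb2', ha3', heq'⟩ := h'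
  refine ⟨A₁.comp B₁, fun x => B₂ (A₂ x), fun x => A₁ (B₃ (A₂ x)) + A₃ x,
    hb1.comp hb1', ha2'.compAff ha2, hb2'.comp hb2,
    ((isAffineF_linear A₁).compAff (ha3'.compAff ha2)).addAff ha3, fun x => ?_⟩
  rw [heq x, heq' (A₂ x), map_add]
  simp [add_assoc]

/-! ### Block linear maps and extension lemmas -/

/-- `bdot w` as a linear map. -/
def bdotLM {n : ℕ} (w : BV n) : BV n →ₗ[ZMod 2] ZMod 2 :=
  ∑ i, (w i) • LinearMap.proj i

lemma bdotLM_apply {n : ℕ} (w x : BV n) : bdotLM w x = bdot w x := by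
  simp [bdotLM, bdot, LinearMap.sum_apply, LinearMap.smul_apply, smul_eq_mul]

lemma isAffine_snoc {n m : ℕ} {A : BV n → BV m} (hA : IsAffineF A)
    (ℓ : BV n →ₗ[ZMod 2] ZMod 2) (c : ZMod 2) :
    IsAffineF (fun x => (Fin.snoc (A x) (ℓ x + c) : BV (m+1))) := by
  obtain ⟨L, t, hL⟩ := hA
  refine ⟨snocLM L ℓ, Fin.snoc t c, fun x => ?_⟩
  show (Fin.snoc (A x) (ℓ x + c) : BV (m+1)) = snocLM L ℓ x + Fin.snoc t c
  rw [hL, snocLM_apply, ← snoc_add]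

/-- The block map `y ↦ (A₁(y₁..y_m), y_{m+1})` as a linear map. -/
def blockLM {m : ℕ} (A₁ : BV m →ₗ[ZMod 2] BV m) : BV (m+1) →ₗ[ZMod 2] BV (m+1) :=
  snocLM (A₁.comp (truncLM 0 m)) (LinearMap.proj (Fin.last m))

lemma blockLM_apply {m : ℕ} (A₁ : BV m →ₗ[ZMod 2] BV m) (y : BV (m+1)) :
    blockLM A₁ y = Fin.snoc (A₁ (fun i => y i.castSucc)) (y (Fin.last m)) := by
  rw [blockLM, snocLM_apply]; rfl

lemma blockLM_bijective {m : ℕ} {A₁ : BV m →ₗ[ZMod 2] BV m} (h : Bijective A₁) :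
    Bijective (blockLM A₁) := by
  constructor
  · intro y z hyz
    rw [blockLM_apply, blockLM_apply] at hyz
    have hlast : y (Fin.last m) = z (Fin.last m) := by
      have := congrFun hyz (Fin.last m); simpa using this
    have htr : A₁ (fun i : Fin m => y i.castSucc) = A₁ (fun i : Fin m => z i.castSucc) := by
      funext i
      have := congrFun hyz i.castSucc; simpa using this
    have htr2 : (fun i : Fin m => y i.castSucc) = (fun i : Fin m => z i.castSucc) := h.1 htr
    funext j
    refine Fin.lastCases hlast (fun i => ?_) j
    exact congrFun htr2 i
  · intro w
    obtain ⟨u, hu⟩ := h.2 (fun i => w i.castSucc)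
    refine ⟨Fin.snoc u (w (Fin.last m)), ?_⟩
    rw [blockLM_apply]
    have h1 : (fun i : Fin m => (Fin.snoc u (w (Fin.last m)) : BV (m+1)) i.castSucc) = u := by
      funext i; simp
    rw [h1, hu]
    simp
    funext j
    refine Fin.lastCases ?_ (fun i => ?_) j <;> simp

/-- Key lemma 1: extending along an EA-equivalence of the truncations. -/
lemma eaequiv_extend_of_data {n m : ℕ} {F F' : BV n → BV m}
    (A₁ : BV m →ₗ[ZMod 2] BV m) (A₂ : BV n → BV n) (A₃ : BV n → BV m)
    (hb1 : Bijective A₁) (ha2 : IsAffineF A₂) (hb2 : Bijective A₂) (ha3 : IsAffineF A₃)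
    (heq : ∀ x, F x = A₁ (F' (A₂ x)) + A₃ x) (f' : BV n → ZMod 2) :
    EAequiv (extendF F (fun x => f' (A₂ x))) (extendF F' f') := by
  have ha3' : IsAffineF (fun x => (Fin.snoc (A₃ x) 0 : BV (m+1))) := by
    have := isAffine_snoc ha3 (0 : BV n →ₗ[ZMod 2] ZMod 2) 0
    simpa using this
  refine ⟨blockLM A₁, A₂, fun x => Fin.snoc (A₃ x) 0, blockLM_bijective hb1,
    ha2, hb2, ha3', fun x => ?_⟩
  rw [blockLM_apply]
  show (Fin.snoc (F x) (f' (A₂ x)) : BV (m+1)) = _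
  have h1 : (fun i : Fin m => (extendF F' f' (A₂ x)) i.castSucc) = F' (A₂ x) := by
    funext i; simp [extendF]
  have h2 : extendF F' f' (A₂ x) (Fin.last m) = f' (A₂ x) := by simp [extendF]
  rw [h1, h2, ← snoc_add, ← heq x, add_zero]

/-- Key lemma 2: adding an affine Boolean function to the last coordinate
preserves EA-equivalence class. -/
lemma eaequiv_extend_add_affine {n m : ℕ} (F : BV n → BV m) (f : BV n → ZMod 2)
    (w : BV n) (c : ZMod 2) :
    EAequiv (extendF F (fun x => f x + (bdot w x + c))) (extendF F f) := by
  have ha3 : IsAffineF (fun x => (Fin.snoc (0 : BV m) (bdot w x + c) : BV (m+1))) := by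
    have := isAffine_snoc (isAffineF_const (0 : BV m)) (bdotLM w) c
    simpa [bdotLM_apply] using this
  refine ⟨LinearMap.id, id, fun x => Fin.snoc (0 : BV m) (bdot w x + c),
    Function.bijective_id, isAffineF_id, Function.bijective_id, ha3, fun x => ?_⟩
  show (Fin.snoc (F x) (f x + (bdot w x + c)) : BV (m+1)) =
    Fin.snoc (F x) (f x) + Fin.snoc (0 : BV m) (bdot w x + c)
  rw [← snoc_add, add_zero]

/-! ### Walsh transform under EA-equivalence, bentness preserved -/

lemma bdot_add_left {p : ℕ} (u v w : BV p) : bdot (u + v) w = bdot u w + bdot v w := by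
  simp [bdot, add_mul, Finset.sum_add_distrib]

lemma bdot_add_right {p : ℕ} (u v w : BV p) : bdot u (v + w) = bdot u v + bdot u w := by
  simp [bdot, mul_add, Finset.sum_add_distrib]

lemma bdot_single_one {p : ℕ} (b : BV p) (i : Fin p) : bdot b (Pi.single i 1) = b i := by
  rw [bdot, Finset.sum_eq_single i]
  · simp
  · intro j _ hj; simp [Pi.single_eq_of_ne hj]
  · simp

/-- Transpose of a linear map w.r.t. `bdot`. -/
def transLM {p q : ℕ} (L : BV p →ₗ[ZMod 2] BV q) : BV q → BV p :=
  fun b j => bdot b (L (Pi.single j 1))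

lemma bdot_smul_right {p : ℕ} (b : BV p) (r : ZMod 2) (v : BV p) :
    bdot b (r • v) = r * bdot b v := by
  simp [bdot, Finset.mul_sum]; congr 1; funext i; ring

lemma bdot_sum_right {p q : ℕ} (b : BV p) (v : Fin q → BV p) :
    bdot b (∑ j, v j) = ∑ j, bdot b (v j) := by
  simp [bdot, Finset.mul_sum]
  rw [Finset.sum_comm]

lemma bdot_transLM {p q : ℕ} (L : BV p →ₗ[ZMod 2] BV q) (b : BV q) (x : BV p) :
    bdot b (L x) = bdot (transLM L b) x := by
  have hx : x = ∑ j, x j • Pi.single j (1 : ZMod 2) := by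
    conv_lhs => rw [← Finset.univ_sum_single x]
    congr 1; funext j
    rw [← Pi.single_smul, smul_eq_mul, mul_one]
  have hLx : L x = ∑ j, x j • L (Pi.single j 1) := by
    conv_lhs => rw [hx]
    rw [map_sum]
    congr 1; funext j; rw [map_smul]
  rw [hLx, bdot_sum_right]
  calc ∑ j, bdot b (x j • L (Pi.single j 1))
      = ∑ j, x j * bdot b (L (Pi.single j 1)) := by
        congr 1; funext j; rw [bdot_smul_right]
    _ = bdot (transLM L b) x := by
        simp only [bdot, transLM]
        congr 1; funext j; rw [mul_comm]

lemma transLM_ne_zero {q : ℕ} {L : BV q →ₗ[ZMod 2] BV q} (hs : Surjective L)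
    {b : BV q} (hb : b ≠ 0) : transLM L b ≠ 0 := by
  intro h0
  apply hb
  funext i
  obtain ⟨x, hx⟩ := hs (Pi.single i 1)
  have := bdot_transLM L b x
  rw [hx, h0, bdot_single_one] at this
  simpa [bdot] using this

lemma neg_one_pow_val_add (u v : ZMod 2) :
    ((-1 : ℤ)) ^ ((u + v).val) = (-1 : ℤ) ^ u.val * (-1 : ℤ) ^ v.val := by
  fin_cases u <;> fin_cases v <;> decide

lemma IsBent.of_eaequiv {n m : ℕ} {H G : BV n → BV m} (h : EAequiv H G) (hG : IsBent G) :
    IsBent H := by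
  obtain ⟨A₁, A₂, A₃, hb1, ha2, hb2, ha3, heq⟩ := h
  obtain ⟨L₃, t₃, h₃⟩ := ha3
  obtain ⟨B₂, haB2, hbB2, hBA, hAB⟩ := affine_inverse ha2 hb2
  obtain ⟨M, s, hM⟩ := haB2
  intro a b hb
  set b' := transLM A₁ b with hb'
  set u := a + transLM L₃ b with hu
  set a' := transLM M u with ha'
  set c := bdot b t₃ + bdot u s with hc
  have key : ∀ x, bdot b (H x) + bdot a x =
      (bdot b' (G (A₂ x)) + bdot a' (A₂ x)) + c := by
    intro x
    have e1 : bdot b (H x) = bdot b' (G (A₂ x)) + (bdot (transLM L₃ b) x + bdot b t₃) := by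
      rw [heq x, bdot_add_right, bdot_transLM, h₃, bdot_add_right, bdot_transLM]
    have e2 : bdot u x = bdot a' (A₂ x) + bdot u s := by
      conv_lhs => rw [show x = M (A₂ x) + s by rw [← hM, hBA]]
      rw [bdot_add_right, bdot_transLM]
    have e3 : bdot a x + bdot (transLM L₃ b) x = bdot u x := by
      rw [hu, bdot_add_left]
    rw [e1]
    rw [hc]
    calc bdot b' (G (A₂ x)) + (bdot (transLM L₃ b) x + bdot b t₃) + bdot a x
        = bdot b' (G (A₂ x)) + (bdot a x + bdot (transLM L₃ b) x) + bdot b t₃ := by ring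
      _ = bdot b' (G (A₂ x)) + bdot u x + bdot b t₃ := by rw [e3]
      _ = bdot b' (G (A₂ x)) + (bdot a' (A₂ x) + bdot u s) + bdot b t₃ := by rw [e2]
      _ = bdot b' (G (A₂ x)) + bdot a' (A₂ x) + (bdot b t₃ + bdot u s) := by ring
  have hwalsh : walsh H a b = (-1 : ℤ) ^ c.val * walsh G a' b' := by
    rw [walsh, walsh, Finset.mul_sum]
    rw [show (∑ x : BV n, (-1:ℤ) ^ ((bdot b (H x) + bdot a x).val))
        = ∑ x : BV n, (-1:ℤ) ^ (((bdot b' (G (A₂ x)) + bdot a' (A₂ x)) + c).val) from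
      Finset.sum_congr rfl (fun x _ => by rw [key x])]
    rw [show (∑ x : BV n, (-1:ℤ) ^ (((bdot b' (G (A₂ x)) + bdot a' (A₂ x)) + c).val))
        = ∑ x : BV n, (-1:ℤ) ^ (((bdot b' (G x) + bdot a' x) + c).val) from
      hb2.sum_comp (fun y => (-1:ℤ) ^ (((bdot b' (G y) + bdot a' y) + c).val))]
    congr 1; funext y
    rw [neg_one_pow_val_add, mul_comm]
  have hb'ne : b' ≠ 0 := transLM_ne_zero hb1.2 hb
  have hcval : ((-1 : ℤ) ^ c.val = 1) ∨ ((-1 : ℤ) ^ c.val = -1) := by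
    have : ∀ e : ZMod 2, ((-1 : ℤ) ^ e.val = 1) ∨ ((-1 : ℤ) ^ e.val = -1) := by decide
    exact this c
  rcases hG a' b' hb'ne with hw | hw <;> rcases hcval with hcv | hcv <;>
    rw [hwalsh, hw, hcv] <;> simp

/-! ### Counting -/

lemma natCard_sigma {ι : Type*} [Fintype ι] (g : ι → Type*) [∀ i, Finite (g i)] :
    Nat.card (Σ i, g i) = ∑ i, Nat.card (g i) := by
  classical
  have : ∀ i, ∃ _ : Fintype (g i), True := fun i => ⟨Fintype.ofFinite (g i), trivial⟩
  choose inst _ using this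
  simp only [Nat.card_eq_fintype_card]
  rw [Fintype.card_sigma]

lemma natCard_sigma_const {ι : Type*} [Finite ι] {g : ι → Type*} [∀ i, Finite (g i)]
    (c : ℕ) (h : ∀ i, Nat.card (g i) = c) : Nat.card (Σ i, g i) = Nat.card ι * c := by
  classical
  have : Fintype ι := Fintype.ofFinite ι
  rw [natCard_sigma]
  simp only [h, Finset.sum_const, Finset.card_univ, smul_eq_mul, Nat.card_eq_fintype_card]

def eqvProdSubtype {α β : Type*} {P : α → Prop} {Q : α → β → Prop} :
    {x : α × β // P x.1 ∧ Q x.1 x.2} ≃ Σ a : {a // P a}, {b // Q a.1 b} where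
  toFun x := ⟨⟨x.1.1, x.2.1⟩, ⟨x.1.2, x.2.2⟩⟩
  invFun s := ⟨(s.1.1, s.2.1), s.1.2, s.2.2⟩
  left_inv x := rfl
  right_inv s := rfl

/-- transport data along an EA-equivalence for extensions. -/
lemma exists_transport {n m : ℕ} {F F' : BV n → BV m} (hF : EAequiv F F') :
    ∃ (A₂ B₂ : BV n → BV n), (∀ x, B₂ (A₂ x) = x) ∧ (∀ y, A₂ (B₂ y) = y) ∧
      ∀ f' : BV n → ZMod 2, EAequiv (extendF F (fun x => f' (A₂ x))) (extendF F' f') := by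
  obtain ⟨A₁, A₂, A₃, hb1, ha2, hb2, ha3, heq⟩ := hF
  obtain ⟨B₂, haB2, hbB2, hBA, hAB⟩ := affine_inverse ha2 hb2
  exact ⟨A₂, B₂, hBA, hAB, fun f' => eaequiv_extend_of_data A₁ A₂ A₃ hb1 ha2 hb2 ha3 heq f'⟩

/-- per-F fiber cardinality. -/
lemma fiber_card {n m : ℕ} {F Fi : BV n → BV m} (G : BV n → BV (m+1))
    (hF : EAequiv F Fi) :
    Nat.card {f : BV n → ZMod 2 // EAequiv (extendF F f) G} =
      Nat.card {f' : BV n → ZMod 2 // EAequiv (extendF Fi f') G} := by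
  obtain ⟨A₂, B₂, hBA, hAB, hsp⟩ := exists_transport hF
  refine Nat.card_congr ⟨fun f => ⟨fun x => f.1 (B₂ x), ?_⟩,
    fun f' => ⟨fun x => f'.1 (A₂ x), (hsp f'.1).trans f'.2⟩, fun f => ?_, fun f' => ?_⟩
  · have h1 := hsp (fun x => f.1 (B₂ x))
    have h2 : (fun x => f.1 (B₂ (A₂ x))) = f.1 := by funext x; rw [hBA]
    rw [h2] at h1
    exact h1.symm.trans f.2
  · exact Subtype.ext (funext fun x => by simp [hBA])
  · exact Subtype.ext (funext fun x => by simp [hAB])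

/-- splitting off the affine part. -/
lemma affine_decomp_card {n : ℕ} (R : (BV n → ZMod 2) → Prop)
    (hinv : ∀ (f : BV n → ZMod 2) (w : BV n) (c : ZMod 2),
      R (fun x => f x + (bdot w x + c)) ↔ R f) :
    Nat.card {f : BV n → ZMod 2 // R f} =
      2 ^ (n + 1) * Nat.card {f : BV n → ZMod 2 // AffineFree f ∧ R f} := by
  have bdot_zero_right : ∀ w : BV n, bdot w 0 = 0 := fun w => by simp [bdot]
  have key1 : ∀ a b : ZMod 2, a + ((a + b) + b) = 0 := by decide
  have key2 : ∀ a b : ZMod 2, (a + b) + b = a := by decide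
  have e : {f : BV n → ZMod 2 // R f} ≃
      (ZMod 2 × BV n) × {f : BV n → ZMod 2 // AffineFree f ∧ R f} := by
    refine ⟨fun f => ((f.1 0, fun i => f.1 (Pi.single i 1) + f.1 0),
      ⟨fun x => f.1 x + (bdot (fun i => f.1 (Pi.single i 1) + f.1 0) x + f.1 0),
        ⟨⟨?_, fun i => ?_⟩, (hinv f.1 _ _).mpr f.2⟩⟩),
      fun p => ⟨fun x => p.2.1 x + (bdot p.1.2 x + p.1.1),
        (hinv p.2.1 p.1.2 p.1.1).mpr p.2.2.2⟩, fun f => ?_, fun p => ?_⟩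
    · show f.1 0 + (bdot (fun i => f.1 (Pi.single i 1) + f.1 0) 0 + f.1 0) = 0
      rw [bdot_zero_right, zero_add]; exact zmod2_add_self _
    · show f.1 (Pi.single i 1) +
        (bdot (fun j => f.1 (Pi.single j 1) + f.1 0) (Pi.single i 1) + f.1 0) = 0
      rw [bdot_single_one]; exact key1 _ _
    · exact Subtype.ext (funext fun x => key2 _ _)
    · obtain ⟨⟨c, w⟩, f₀, ⟨haf0, hafi⟩, hR⟩ := p
      set f : BV n → ZMod 2 := fun x => f₀ x + (bdot w x + c) with hf
      have hc : f 0 = c := by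
        rw [hf]; simp only [bdot_zero_right, haf0, zero_add]
      have hw : (fun i => f (Pi.single i 1) + f 0) = w := by
        funext i
        rw [hf]; simp only [bdot_single_one, bdot_zero_right, haf0, hafi, zero_add]
        exact key2 _ _
      refine Prod.ext_iff.mpr ⟨Prod.ext_iff.mpr ⟨hc, hw⟩, ?_⟩
      refine Subtype.ext (funext fun x => ?_)
      show f x + (bdot (fun i => f (Pi.single i 1) + f 0) x + f 0) = f₀ x
      rw [hw, hc, hf]
      exact key2 _ _
  rw [Nat.card_congr e, Nat.card_prod]
  congr 1
  rw [Nat.card_eq_fintype_card]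
  simp [pow_succ, mul_comm]

/-- The cardinality of the EA-equivalence class of an `(n,m+1)`-bent function `G` equals
`2^{n+1} · Σᵢ |Cᵢᵐ| · |𝓕(Cᵢᵐ, class of G)|`, where `F₁, …, F_k` are pairwise
EA-inequivalent `(n,m)`-bent representatives covering the truncations of all members of
the class of `G`. -/
theorem card_of_equivalence_class
    {n m k : ℕ} (hev : Even n) (hm : 1 ≤ m)
    (G : BV n → BV (m + 1)) (hG : IsBent G)
    (Fs : Fin k → (BV n → BV m)) (hFs : ∀ i, IsBent (Fs i))
    (hpair : ∀ i j, i ≠ j → ¬ EAequiv (Fs i) (Fs j))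
    (hcover : ∀ H : BV n → BV (m + 1), IsBent H → EAequiv H G →
      ∃ i, EAequiv (truncateF H) (Fs i)) :
    Nat.card {H : BV n → BV (m + 1) // EAequiv H G} =
      2 ^ (n + 1) *
        ∑ i : Fin k,
          Nat.card {F : BV n → BV m // EAequiv F (Fs i)} *
            Nat.card {f : BV n → ZMod 2 //
              AffineFree f ∧ EAequiv (extendF (Fs i) f) G} := by
  classical
  have e1 : {H : BV n → BV (m+1) // EAequiv H G} ≃
      Σ i : Fin k, {H : BV n → BV (m+1) // EAequiv H G ∧ EAequiv (truncateF H) (Fs i)} := by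
    refine ⟨fun H => ⟨Classical.choose (hcover H.1 (IsBent.of_eaequiv H.2 hG) H.2),
      ⟨H.1, H.2, Classical.choose_spec (hcover H.1 (IsBent.of_eaequiv H.2 hG) H.2)⟩⟩,
      fun s => ⟨s.2.1, s.2.2.1⟩, fun H => rfl, fun s => ?_⟩
    obtain ⟨i, H, h1, h2⟩ := s
    have hi : Classical.choose (hcover H (IsBent.of_eaequiv h1 hG) h1) = i := by
      by_contra hne
      exact hpair _ _ hne
        ((Classical.choose_spec (hcover H (IsBent.of_eaequiv h1 hG) h1)).symm.trans h2)
    subst hi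
    rfl
  rw [Nat.card_congr e1, natCard_sigma]
  rw [Finset.mul_sum]
  refine Finset.sum_congr rfl (fun i _ => ?_)
  -- step 2: split H into (F, f)
  have e2 : {H : BV n → BV (m+1) // EAequiv H G ∧ EAequiv (truncateF H) (Fs i)} ≃
      {p : (BV n → BV m) × (BV n → ZMod 2) //
        EAequiv p.1 (Fs i) ∧ EAequiv (extendF p.1 p.2) G} := by
    refine ⟨fun H => ⟨(truncateF H.1, fun x => H.1 x (Fin.last m)), H.2.2, ?_⟩,
      fun p => ⟨extendF p.1.1 p.1.2, p.2.2, ?_⟩, fun H => ?_, fun p => ?_⟩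
    · rw [extend_trunc]; exact H.2.1
    · rw [trunc_extend]; exact p.2.1
    · exact Subtype.ext (extend_trunc H.1)
    · exact Subtype.ext (Prod.ext_iff.mpr ⟨trunc_extend _ _, last_extend _ _⟩)
  rw [Nat.card_congr (e2.trans (eqvProdSubtype (P := fun F => EAequiv F (Fs i)) (Q := fun F f => EAequiv (extendF F f) G)))]
  rw [natCard_sigma_const (Nat.card {f' : BV n → ZMod 2 // EAequiv (extendF (Fs i) f') G})
    (fun F => fiber_card G F.2)]
  have hdecomp := affine_decomp_card (fun f => EAequiv (extendF (Fs i) f) G)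
    (fun f w c => ⟨fun h => (eaequiv_extend_add_affine (Fs i) f w c).symm.trans h,
      fun h => (eaequiv_extend_add_affine (Fs i) f w c).trans h⟩)
  rw [hdecomp]
  ring
end
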